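/- arXiv:0808.3054 — 3 statements merged into one kernel-verified Lean document; each statement's English description precedes it below -/
import Mathlib

section
/- There exists a constant c > 0, depending only on ε, I and H, such that for every integer n ≥ 2, all points t^1, …, t^n ∈ I satisfying t_ℓ^1 ≤ t_ℓ^2 ≤ ⋯ ≤ t_ℓ^n, and all real numbers a_1, …, a_{n−1}, one has ∫_{ℝ^N} ( f_{t^n}^ℓ(r) − ∑_{j=1}^{n−1} a_j f_{t^j}^ℓ(r) )² dr ≥ c (t_ℓ^n − t_ℓ^{n−1})^{2H_ℓ}. -/
open MeasureTheory Real Set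

noncomputable section

/-- The kernel `f_t^ℓ` of the Wiener-integral field `Y_ℓ`:
`f_t^ℓ(r) = 1_{R_ℓ(t)}(r) ∏_k (t_k − r_k)^{H_k − 1/2}`, where
`R_ℓ(t) = {r : 0 ≤ r_i ≤ ε (i ≠ ℓ), ε < r_ℓ ≤ t_ℓ}`. -/
def fker (N : ℕ) (H : Fin N → ℝ) (ε : ℝ) (ℓ : Fin N) (t : Fin N → ℝ) :
    (Fin N → ℝ) → ℝ :=
  Set.indicator {r | (∀ i, i ≠ ℓ → 0 ≤ r i ∧ r i ≤ ε) ∧ ε < r ℓ ∧ r ℓ ≤ t ℓ}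
    (fun r => ∏ k, (t k - r k) ^ (H k - 1 / 2))

lemma fker_def (N : ℕ) (H : Fin N → ℝ) (ε : ℝ) (ℓ : Fin N) (t : Fin N → ℝ) :
    fker N H ε ℓ t = Set.indicator
      {r | (∀ i, i ≠ ℓ → 0 ≤ r i ∧ r i ≤ ε) ∧ ε < r ℓ ∧ r ℓ ≤ t ℓ}
      (fun r => ∏ k, (t k - r k) ^ (H k - 1 / 2)) := rfl

lemma rpow_min_le {lo x hi : ℝ} (hlo : 0 < lo) (h1 : lo ≤ x) (h2 : x ≤ hi) (p : ℝ) :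
    min (lo ^ p) (hi ^ p) ≤ x ^ p := by
  rcases le_or_gt 0 p with hp | hp
  · exact le_trans (min_le_left _ _) (Real.rpow_le_rpow hlo.le h1 hp)
  · exact le_trans (min_le_right _ _)
      (Real.rpow_le_rpow_of_nonpos (hlo.trans_le h1) h2 hp.le)

lemma rpow_le_max {lo x hi : ℝ} (hlo : 0 < lo) (h1 : lo ≤ x) (h2 : x ≤ hi) (p : ℝ) :
    x ^ p ≤ max (lo ^ p) (hi ^ p) := by
  rcases le_or_gt 0 p with hp | hp
  · exact le_trans (Real.rpow_le_rpow (hlo.le.trans h1) h2 hp) (le_max_right _ _)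
  · exact le_trans (Real.rpow_le_rpow_of_nonpos hlo h1 hp.le) (le_max_left _ _)

lemma sq_rpow_half (x : ℝ) (hx : 0 ≤ x) (q : ℝ) :
    (x ^ (q - 1 / 2)) ^ 2 = x ^ (2 * q - 1) := by
  rw [← Real.rpow_natCast (x ^ (q - 1 / 2)) 2, ← Real.rpow_mul hx]
  congr 1
  push_cast
  ring

lemma half_rpow_le {Δ x p : ℝ} (hΔ : 0 < Δ) (hp : p ≤ 1) (h1 : Δ / 2 ≤ x) (h2 : x ≤ Δ) :
    Δ ^ p / 2 ≤ x ^ p := by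
  have hmin := rpow_min_le (half_pos hΔ) h1 h2 p
  refine le_trans (le_min ?_ ?_) hmin
  · have key : (Δ / 2 : ℝ) ^ p = Δ ^ p * (2⁻¹ : ℝ) ^ p := by
      rw [div_eq_mul_inv, Real.mul_rpow hΔ.le (by norm_num)]
    have h12 : (2⁻¹ : ℝ) ≤ (2⁻¹ : ℝ) ^ p := by
      have := Real.rpow_le_rpow_of_exponent_ge (x := (2⁻¹ : ℝ)) (by norm_num) (by norm_num) hp
      rwa [Real.rpow_one] at this
    have hnn : 0 ≤ Δ ^ p := Real.rpow_nonneg hΔ.le p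
    rw [key]
    nlinarith
  · have hnn : 0 ≤ Δ ^ p := Real.rpow_nonneg hΔ.le p
    linarith

lemma region_eq (N : ℕ) (ε : ℝ) (ℓ : Fin N) (t : Fin N → ℝ) :
    {r : Fin N → ℝ | (∀ i, i ≠ ℓ → 0 ≤ r i ∧ r i ≤ ε) ∧ ε < r ℓ ∧ r ℓ ≤ t ℓ} =
      Set.pi Set.univ (fun i => if i = ℓ then Set.Ioc ε (t ℓ) else Set.Icc 0 ε) := by
  ext r
  simp only [Set.mem_setOf_eq, Set.mem_pi, Set.mem_univ, true_implies]
  constructor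
  · rintro ⟨h1, h2, h3⟩ i
    by_cases hi : i = ℓ
    · subst hi; simp only [if_pos rfl, Set.mem_Ioc]; exact ⟨h2, h3⟩
    · simp only [if_neg hi, Set.mem_Icc]; exact ⟨(h1 i hi).1, (h1 i hi).2⟩
  · intro h
    refine ⟨fun i hi => ?_, ?_, ?_⟩
    · have := h i; rw [if_neg hi] at this; exact ⟨this.1, this.2⟩
    · have := h ℓ; rw [if_pos rfl] at this; exact this.1
    · have := h ℓ; rw [if_pos rfl] at this; exact this.2

lemma fker_measurable (N : ℕ) (H : Fin N → ℝ) (ε : ℝ) (ℓ : Fin N) (t : Fin N → ℝ) :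
    Measurable (fker N H ε ℓ t) := by
  rw [fker_def]
  refine Measurable.indicator (by fun_prop) ?_
  rw [region_eq]
  refine MeasurableSet.univ_pi fun i => ?_
  by_cases hi : i = ℓ
  · rw [if_pos hi]; exact measurableSet_Ioc
  · rw [if_neg hi]; exact measurableSet_Icc

lemma fker_memL2 (N : ℕ) (H : Fin N → ℝ) (hH : ∀ i, 0 < H i ∧ H i < 1)
    (a b : Fin N → ℝ) (ha : ∀ i, 0 < a i) (hab : ∀ i, a i ≤ b i)
    (ε : ℝ) (hε : 0 < ε) (hεa : ∀ i, ε < a i) (ℓ : Fin N)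
    (t : Fin N → ℝ) (ht : t ∈ Set.Icc a b) : MemLp (fker N H ε ℓ t) 2 volume := by
  have meas := fker_measurable N H ε ℓ t
  rw [memLp_two_iff_integrable_sq meas.aestronglyMeasurable]
  have hεt : ε ≤ t ℓ := (hεa ℓ).le.trans (ht.1 ℓ)
  -- the dominating functions
  have hintA : Integrable
      ((Set.Ioc ε (t ℓ)).indicator fun y => (t ℓ - y) ^ (2 * H ℓ - 1)) := by
    have hp : (-1 : ℝ) < 2 * H ℓ - 1 := by linarith [(hH ℓ).1]
    have h0 : IntervalIntegrable (fun x : ℝ => x ^ (2 * H ℓ - 1)) volume (t ℓ - ε) 0 :=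
      intervalIntegral.intervalIntegrable_rpow' hp
    have h1 := h0.comp_sub_left (t ℓ)
    have h2 : IntervalIntegrable (fun x : ℝ => (t ℓ - x) ^ (2 * H ℓ - 1)) volume ε (t ℓ) := by
      simpa using h1
    rw [intervalIntegrable_iff_integrableOn_Ioc_of_le hεt] at h2
    exact h2.integrable_indicator measurableSet_Ioc
  have hintB : ∀ k : Fin N, Integrable
      ((Set.Icc (0:ℝ) ε).indicator fun _ : ℝ =>
        max ((a k - ε) ^ (2 * H k - 1)) (b k ^ (2 * H k - 1))) := by
    intro k
    exact (integrableOn_const measure_Icc_lt_top.ne).integrable_indicator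
      measurableSet_Icc
  have hG : Integrable (fun r : Fin N → ℝ => ∏ k,
      (if k = ℓ then (Set.Ioc ε (t ℓ)).indicator (fun y => (t ℓ - y) ^ (2 * H ℓ - 1))
        else (Set.Icc (0:ℝ) ε).indicator fun _ =>
          max ((a k - ε) ^ (2 * H k - 1)) (b k ^ (2 * H k - 1))) (r k)) := by
    apply Integrable.fintype_prod (𝕜 := ℝ)
    intro k
    by_cases hk : k = ℓ
    · subst hk; simpa using hintA
    · simpa [hk] using hintB k
  have hg_nonneg : ∀ (k : Fin N) (x : ℝ), 0 ≤
      (if k = ℓ then (Set.Ioc ε (t ℓ)).indicator (fun y => (t ℓ - y) ^ (2 * H ℓ - 1))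
        else (Set.Icc (0:ℝ) ε).indicator fun _ =>
          max ((a k - ε) ^ (2 * H k - 1)) (b k ^ (2 * H k - 1))) x := by
    intro k x
    by_cases hk : k = ℓ
    · subst hk; rw [if_pos rfl]
      apply Set.indicator_nonneg
      intro y hy
      exact Real.rpow_nonneg (by linarith [hy.2]) _
    · rw [if_neg hk]
      apply Set.indicator_nonneg
      intro y _
      exact le_trans (Real.rpow_nonneg (by linarith [hεa k]) _) (le_max_left _ _)
  refine hG.mono' (meas.pow_const 2).aestronglyMeasurable
    (Filter.Eventually.of_forall fun r => ?_)
  rw [Real.norm_eq_abs, abs_of_nonneg (sq_nonneg _)]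
  by_cases hr : r ∈ {r : Fin N → ℝ |
      (∀ i, i ≠ ℓ → 0 ≤ r i ∧ r i ≤ ε) ∧ ε < r ℓ ∧ r ℓ ≤ t ℓ}
  · obtain ⟨h1, h2, h3⟩ := hr
    have hbase : ∀ k, 0 ≤ t k - r k := by
      intro k
      by_cases hk : k = ℓ
      · subst hk; linarith
      · have := (h1 k hk).2
        have := ht.1 k
        have := hεa k
        linarith
    rw [fker_def, Set.indicator_of_mem (show r ∈ {r : Fin N → ℝ |
      (∀ i, i ≠ ℓ → 0 ≤ r i ∧ r i ≤ ε) ∧ ε < r ℓ ∧ r ℓ ≤ t ℓ} from ⟨h1, h2, h3⟩),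
      ← Finset.prod_pow]
    apply Finset.prod_le_prod (fun k _ => sq_nonneg _)
    intro k _
    rw [sq_rpow_half _ (hbase k) (H k)]
    by_cases hk : k = ℓ
    · subst hk
      rw [if_pos rfl, Set.indicator_of_mem (Set.mem_Ioc.mpr ⟨h2, h3⟩)]
    · rw [if_neg hk, Set.indicator_of_mem (Set.mem_Icc.mpr ⟨(h1 k hk).1, (h1 k hk).2⟩)]
      refine rpow_le_max (by linarith [hεa k]) ?_ ?_ _
      · have := ht.1 k; have := (h1 k hk).2; linarith
      · have := ht.2 k; have := (h1 k hk).1; linarith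
  · rw [fker_def, Set.indicator_of_notMem hr]
    simpa using Finset.prod_nonneg fun k _ => hg_nonneg k (r k)

/-- Lemma 2.1, L² form: strong local nondeterminism of `Y_ℓ` along
the `ℓ`-th direction. -/
theorem statement15 (N : ℕ) (H : Fin N → ℝ) (hH : ∀ i, 0 < H i ∧ H i < 1)
    (a b : Fin N → ℝ) (ha : ∀ i, 0 < a i) (hab : ∀ i, a i ≤ b i)
    (ε : ℝ) (hε : 0 < ε) (hεa : ∀ i, ε < a i) (ℓ : Fin N) :
    ∃ c : ℝ, 0 < c ∧
      ∀ n : ℕ, 2 ≤ n → ∀ t : ℕ → (Fin N → ℝ),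
        (∀ j < n, t j ∈ Set.Icc a b) →
        (∀ i j, i ≤ j → j < n → t i ℓ ≤ t j ℓ) →
        ∀ co : ℕ → ℝ,
          c * (t (n - 1) ℓ - t (n - 2) ℓ) ^ (2 * H ℓ) ≤
            ∫ r : Fin N → ℝ,
              (fker N H ε ℓ (t (n - 1)) r -
                ∑ j ∈ Finset.range (n - 1), co j * fker N H ε ℓ (t j) r) ^ 2 := by
  classical
  set m : Fin N → ℝ := fun i =>
    min ((a i - ε) ^ (2 * H i - 1)) ((b i) ^ (2 * H i - 1)) with hm
  have hm_pos : ∀ i, 0 < m i := fun i =>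
    lt_min (Real.rpow_pos_of_pos (by linarith [hεa i]) _)
      (Real.rpow_pos_of_pos (by linarith [hεa i, hε, hab i]) _)
  refine ⟨(1 / 4) * ∏ i ∈ Finset.univ.erase ℓ, (ε * m i), ?_, ?_⟩
  · have : 0 < ∏ i ∈ Finset.univ.erase ℓ, (ε * m i) :=
      Finset.prod_pos fun i _ => mul_pos hε (hm_pos i)
    linarith
  intro n hn t htI htmono co
  have htn : t (n - 1) ∈ Set.Icc a b := htI (n - 1) (by omega)
  have htn2 : t (n - 2) ∈ Set.Icc a b := htI (n - 2) (by omega)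
  set s := t (n - 2) ℓ with hs_def
  set u := t (n - 1) ℓ with hu_def
  have hsu : s ≤ u := htmono (n - 2) (n - 1) (by omega) (by omega)
  -- integrability of the square
  have hD2int : Integrable (fun r : Fin N → ℝ =>
      (fker N H ε ℓ (t (n - 1)) r -
        ∑ j ∈ Finset.range (n - 1), co j * fker N H ε ℓ (t j) r) ^ 2) := by
    have hmem : MemLp (fun r : Fin N → ℝ =>
        fker N H ε ℓ (t (n - 1)) r -
          ∑ j ∈ Finset.range (n - 1), co j * fker N H ε ℓ (t j) r) 2 volume := by
      have h1 : MemLp (fker N H ε ℓ (t (n - 1))) 2 volume :=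
        fker_memL2 N H hH a b ha hab ε hε hεa ℓ _ htn
      have h2 : MemLp (fun r : Fin N → ℝ =>
          ∑ j ∈ Finset.range (n - 1), co j * fker N H ε ℓ (t j) r) 2 volume := by
        apply memLp_finset_sum
        intro j hj
        have hj' : j < n := by have := Finset.mem_range.mp hj; omega
        exact (fker_memL2 N H hH a b ha hab ε hε hεa ℓ _ (htI j hj')).const_mul (co j)
      exact h1.sub h2
    exact hmem.integrable_sq
  rcases eq_or_lt_of_le hsu with heq | hlt
  · have h0 : u - s = 0 := by rw [heq, sub_self]
    rw [h0, Real.zero_rpow (by have := (hH ℓ).1; positivity), mul_zero]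
    exact integral_nonneg fun r => sq_nonneg _
  · set Δ := u - s with hΔ_def
    have hΔ : 0 < Δ := sub_pos.mpr hlt
    set S : Set (Fin N → ℝ) :=
      Set.pi Set.univ (fun i => if i = ℓ then Set.Ioc s (s + Δ / 2) else Set.Icc 0 ε)
      with hS
    have hSmeas : MeasurableSet S := by
      rw [hS]
      refine MeasurableSet.univ_pi fun i => ?_
      by_cases hi : i = ℓ
      · rw [if_pos hi]; exact measurableSet_Ioc
      · rw [if_neg hi]; exact measurableSet_Icc
    have hlow_nonneg : ∀ k : Fin N,
        0 ≤ (if k = ℓ then Δ ^ (2 * H ℓ - 1) / 2 else m k) := by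
      intro k
      by_cases hk : k = ℓ
      · rw [if_pos hk]
        have := Real.rpow_nonneg hΔ.le (2 * H ℓ - 1); linarith
      · rw [if_neg hk]; exact (hm_pos k).le
    set C : ℝ := ∏ k, (if k = ℓ then Δ ^ (2 * H ℓ - 1) / 2 else m k) with hC
    have hC_nonneg : 0 ≤ C := Finset.prod_nonneg fun k _ => hlow_nonneg k
    -- pointwise bound
    have hεs : ε < s := lt_of_lt_of_le (hεa ℓ) (htn2.1 ℓ)
    have hpt : ∀ r : Fin N → ℝ, S.indicator (fun _ => C) r ≤
        (fker N H ε ℓ (t (n - 1)) r -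
          ∑ j ∈ Finset.range (n - 1), co j * fker N H ε ℓ (t j) r) ^ 2 := by
      intro r
      by_cases hr : r ∈ S
      · have hri : ∀ i, r i ∈ (if i = ℓ then Set.Ioc s (s + Δ / 2) else Set.Icc (0:ℝ) ε) :=
          fun i => hr i (Set.mem_univ i)
        have hrℓ : r ℓ ∈ Set.Ioc s (s + Δ / 2) := by
          have := hri ℓ; rwa [if_pos rfl] at this
        have hrother : ∀ i, i ≠ ℓ → r i ∈ Set.Icc (0:ℝ) ε := by
          intro i hi; have := hri i; rwa [if_neg hi] at this
        have hεrℓ : ε < r ℓ := hεs.trans hrℓ.1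
        have hrℓu : r ℓ ≤ u := by
          have h2 := hrℓ.2
          have : s + Δ = u := by rw [hΔ_def]; ring
          linarith
        have hzero : ∀ j ∈ Finset.range (n - 1), fker N H ε ℓ (t j) r = 0 := by
          intro j hj
          have hj' : t j ℓ ≤ s := htmono j (n - 2)
            (by have := Finset.mem_range.mp hj; omega) (by omega)
          have hnot : r ∉ {r : Fin N → ℝ |
              (∀ i, i ≠ ℓ → 0 ≤ r i ∧ r i ≤ ε) ∧ ε < r ℓ ∧ r ℓ ≤ t j ℓ} := by
            intro hmem
            have := hmem.2.2
            have := hrℓ.1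
            linarith
          rw [fker_def]; exact Set.indicator_of_notMem hnot _
        have hsum : ∑ j ∈ Finset.range (n - 1), co j * fker N H ε ℓ (t j) r = 0 :=
          Finset.sum_eq_zero fun j hj => by rw [hzero j hj, mul_zero]
        have hrmem : r ∈ {r : Fin N → ℝ |
            (∀ i, i ≠ ℓ → 0 ≤ r i ∧ r i ≤ ε) ∧ ε < r ℓ ∧ r ℓ ≤ t (n - 1) ℓ} :=
          ⟨fun i hi => ⟨(hrother i hi).1, (hrother i hi).2⟩, hεrℓ, hrℓu⟩
        have hbase : ∀ k, 0 ≤ t (n - 1) k - r k := by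
          intro k
          by_cases hk : k = ℓ
          · rw [hk, ← hu_def]; linarith [hrℓu]
          · have := (hrother k hk).2
            have := htn.1 k
            have := hεa k
            linarith
        rw [Set.indicator_of_mem hr, hsum, sub_zero, fker_def,
          Set.indicator_of_mem hrmem, hC, ← Finset.prod_pow]
        apply Finset.prod_le_prod (fun k _ => hlow_nonneg k)
        intro k _
        rw [sq_rpow_half _ (hbase k) (H k)]
        by_cases hk : k = ℓ
        · rw [if_pos hk, hk, ← hu_def]
          have hsu' : s + Δ = u := by rw [hΔ_def]; ring
          have h1 : Δ / 2 ≤ u - r ℓ := by linarith [hrℓ.2]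
          have h2 : u - r ℓ ≤ Δ := by linarith [hrℓ.1]
          exact half_rpow_le hΔ (by linarith [(hH ℓ).2]) h1 h2
        · rw [if_neg hk]
          refine le_trans (le_of_eq rfl) (rpow_min_le (x := t (n - 1) k - r k)
            (lo := a k - ε) (hi := b k) (by linarith [hεa k]) ?_ ?_ _)
          · have := htn.1 k; have := (hrother k hk).2; linarith
          · have := htn.2 k; have := (hrother k hk).1; linarith
      · rw [Set.indicator_of_notMem hr]
        exact sq_nonneg _
    -- volume of S
    have hvol : volume S = ∏ i, ENNReal.ofReal (if i = ℓ then Δ / 2 else ε) := by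
      rw [hS, volume_pi_pi]
      refine Finset.prod_congr rfl fun i _ => ?_
      by_cases hi : i = ℓ
      · rw [if_pos hi, if_pos hi, Real.volume_Ioc]
        congr 1; ring
      · rw [if_neg hi, if_neg hi, Real.volume_Icc, sub_zero]
    have hvolR : (volume S).toReal = ∏ i, (if i = ℓ then Δ / 2 else ε) := by
      rw [hvol, ENNReal.toReal_prod]
      refine Finset.prod_congr rfl fun i _ => ENNReal.toReal_ofReal ?_
      by_cases hi : i = ℓ
      · rw [if_pos hi]; linarith
      · rw [if_neg hi]; linarith
    have hIntInd : ∫ r : Fin N → ℝ, S.indicator (fun _ => C) r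
        = (volume S).toReal * C := by
      rw [integral_indicator_const C hSmeas, smul_eq_mul]; rfl
    have harith : (1 / 4 * ∏ i ∈ Finset.univ.erase ℓ, (ε * m i)) * Δ ^ (2 * H ℓ)
        = (volume S).toReal * C := by
      rw [hvolR, hC, ← Finset.prod_mul_distrib,
        ← Finset.mul_prod_erase Finset.univ _ (Finset.mem_univ ℓ)]
      have h1 : ∀ i ∈ Finset.univ.erase ℓ,
          ((if i = ℓ then Δ / 2 else ε) * (if i = ℓ then Δ ^ (2 * H ℓ - 1) / 2 else m i))
            = ε * m i := by
        intro i hi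
        rw [if_neg (Finset.mem_erase.mp hi).1, if_neg (Finset.mem_erase.mp hi).1]
      rw [Finset.prod_congr rfl h1, if_pos rfl, if_pos rfl]
      have hsplit : Δ ^ (2 * H ℓ) = Δ ^ (2 * H ℓ - 1) * Δ := by
        rw [← Real.rpow_add_one (ne_of_gt hΔ) (2 * H ℓ - 1)]
        norm_num
      rw [hsplit]; ring
    calc (1 / 4 * ∏ i ∈ Finset.univ.erase ℓ, (ε * m i)) * Δ ^ (2 * H ℓ)
        = (volume S).toReal * C := harith
      _ = ∫ r : Fin N → ℝ, S.indicator (fun _ => C) r := hIntInd.symm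
      _ ≤ _ := integral_mono_of_nonneg
          (Filter.Eventually.of_forall fun r =>
            Set.indicator_nonneg (fun _ _ => hC_nonneg) r)
          hD2int (Filter.Eventually.of_forall hpt)
end
end

section
/- Let n ≥ 1 and k ≥ 1 be integers, let B_1, …, B_k be real symmetric positive definite n×n matrices, let A be a real symmetric n×n matrix such that xᵀAx ≥ ∑_{ℓ=1}^k xᵀB_ℓx for all x ∈ ℝ^n, and let p_1, …, p_k ∈ [1,∞) satisfy ∑_{ℓ=1}^k 1/p_ℓ = 1. Then A is positive definite and det A ≥ ∏_{ℓ=1}^k (det B_ℓ)^{1/p_ℓ}. -/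
open Matrix

noncomputable section

/-- A positive semidefinite real matrix whose quadratic form is dominated by the
standard one has determinant at most `1`. -/
lemma aux_det_le_one {n : ℕ} {M : Matrix (Fin n) (Fin n) ℝ} (hM : M.PosSemidef)
    (h : ∀ x : Fin n → ℝ, x ⬝ᵥ M.mulVec x ≤ x ⬝ᵥ x) : M.det ≤ 1 := by
  have hdet : M.det = ∏ i, hM.1.eigenvalues i := by
    simpa using hM.1.det_eq_prod_eigenvalues
  rw [hdet]
  refine Finset.prod_le_one (fun i _ => hM.eigenvalues_nonneg i) (fun i _ => ?_)
  set v : Fin n → ℝ := ⇑(hM.1.eigenvectorBasis i) with hv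
  have hv0 : v ≠ 0 := by
    have := hM.1.eigenvectorBasis.orthonormal.ne_zero i
    intro hc
    apply this
    ext j
    exact congrFun hc j
  have hvv : 0 < v ⬝ᵥ v := by
    have := (dotProduct_star_self_pos_iff (v := v)).mpr hv0
    simpa using this
  have heig : M.mulVec v = hM.1.eigenvalues i • v := hM.1.mulVec_eigenvectorBasis i
  have h1 : v ⬝ᵥ M.mulVec v = hM.1.eigenvalues i * (v ⬝ᵥ v) := by
    rw [heig, dotProduct_smul, smul_eq_mul]
  have h2 := h v
  rw [h1] at h2
  nlinarith [h2, hvv]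

/-- linear-algebra content of (2.11)/(2.13): if the quadratic form
of a symmetric matrix `A` dominates the sum of the quadratic forms of positive definite
matrices `B₁, …, B_k`, then `A` is positive definite and
`det A ≥ ∏ (det B_ℓ)^{1/p_ℓ}` for any Hölder exponents `p_ℓ`. -/
theorem statement17 (n k : ℕ) (hn : 1 ≤ n) (hk : 1 ≤ k)
    (A : Matrix (Fin n) (Fin n) ℝ) (hA : A.IsSymm)
    (Bm : Fin k → Matrix (Fin n) (Fin n) ℝ) (hBm : ∀ ℓ, (Bm ℓ).PosDef)
    (hAB : ∀ x : Fin n → ℝ, ∑ ℓ, x ⬝ᵥ (Bm ℓ).mulVec x ≤ x ⬝ᵥ A.mulVec x)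
    (p : Fin k → ℝ) (hp : ∀ ℓ, 1 ≤ p ℓ) (hps : ∑ ℓ, 1 / p ℓ = 1) :
    A.PosDef ∧ ∏ ℓ, (Bm ℓ).det ^ (1 / p ℓ) ≤ A.det := by
  haveI : NeZero k := ⟨Nat.one_le_iff_ne_zero.mp hk⟩
  -- A is positive definite
  have hAH : A.IsHermitian := by
    rw [Matrix.IsHermitian, conjTranspose_eq_transpose_of_trivial]
    exact hA
  have hApd : A.PosDef := by
    refine Matrix.PosDef.of_dotProduct_mulVec_pos hAH fun x hx => ?_
    have h1 : star x = x := by simp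
    rw [h1]
    calc (0 : ℝ) < ∑ ℓ, x ⬝ᵥ (Bm ℓ).mulVec x := by
          refine Finset.sum_pos (fun ℓ _ => ?_) Finset.univ_nonempty
          have := (hBm ℓ).dotProduct_mulVec_pos hx
          simpa using this
      _ ≤ x ⬝ᵥ A.mulVec x := hAB x
  refine ⟨hApd, ?_⟩
  -- the square root of A
  set S : Matrix (Fin n) (Fin n) ℝ := (open MatrixOrder in CFC.sqrt A) with hSdef
  have hS : S.PosSemidef := (open MatrixOrder in (CFC.sqrt_nonneg A).posSemidef)
  have hSS : S * S = A := (open MatrixOrder in CFC.sqrt_mul_sqrt_self A hApd.posSemidef.nonneg)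
  have hdetA : 0 < A.det := hApd.det_pos
  have hdetS : S.det * S.det = A.det := by rw [← det_mul, hSS]
  have hdetS0 : S.det ≠ 0 := by
    intro h0; rw [h0, mul_zero] at hdetS; exact hdetA.ne' hdetS.symm
  have hdetSu : IsUnit S.det := isUnit_iff_ne_zero.mpr hdetS0
  have hSinv : S * S⁻¹ = 1 := mul_nonsing_inv S hdetSu
  have hSinvH : (S⁻¹).IsHermitian := hS.1.inv
  have hSinvT : (S⁻¹)ᴴ = S⁻¹ := hSinvH
  -- the conjugated matrices
  set D : Fin k → Matrix (Fin n) (Fin n) ℝ := fun ℓ => S⁻¹ * Bm ℓ * S⁻¹ with hDdef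
  have hDpsd : ∀ ℓ, (D ℓ).PosSemidef := by
    intro ℓ
    have := (hBm ℓ).posSemidef.conjTranspose_mul_mul_same S⁻¹
    rwa [hSinvT] at this
  -- quadratic form identity
  have hquad : ∀ ℓ (y : Fin n → ℝ),
      y ⬝ᵥ (D ℓ).mulVec y = (S⁻¹.mulVec y) ⬝ᵥ (Bm ℓ).mulVec (S⁻¹.mulVec y) := by
    intro ℓ y
    rw [hDdef]
    simp only [← mulVec_mulVec]
    rw [dotProduct_mulVec y, ← mulVec_transpose]
    congr 1
    rw [show (S⁻¹)ᵀ = S⁻¹ from by rw [← conjTranspose_eq_transpose_of_trivial]; exact hSinvT]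
  -- the sum of quadratic forms of the D's is dominated by the standard one
  have hsum : ∀ y : Fin n → ℝ, ∑ ℓ, y ⬝ᵥ (D ℓ).mulVec y ≤ y ⬝ᵥ y := by
    intro y
    have h1 : ∑ ℓ, y ⬝ᵥ (D ℓ).mulVec y
        = ∑ ℓ, (S⁻¹.mulVec y) ⬝ᵥ (Bm ℓ).mulVec (S⁻¹.mulVec y) := by
      exact Finset.sum_congr rfl fun ℓ _ => hquad ℓ y
    rw [h1]
    calc ∑ ℓ, (S⁻¹.mulVec y) ⬝ᵥ (Bm ℓ).mulVec (S⁻¹.mulVec y)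
        ≤ (S⁻¹.mulVec y) ⬝ᵥ A.mulVec (S⁻¹.mulVec y) := hAB _
      _ = y ⬝ᵥ y := by
          rw [← hSS]
          rw [← mulVec_mulVec, dotProduct_mulVec, ← mulVec_transpose,
            show Sᵀ = S from by rw [← conjTranspose_eq_transpose_of_trivial]; exact hS.1,
            mulVec_mulVec, hSinv, one_mulVec]
  -- each D ℓ has determinant at most 1
  have hDdet : ∀ ℓ, (D ℓ).det ≤ 1 := by
    intro ℓ
    refine aux_det_le_one (hDpsd ℓ) (fun y => ?_)
    calc y ⬝ᵥ (D ℓ).mulVec y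
        ≤ ∑ m, y ⬝ᵥ (D m).mulVec y := by
          refine Finset.single_le_sum (f := fun m => y ⬝ᵥ (D m).mulVec y)
            (fun m _ => ?_) (Finset.mem_univ ℓ)
          have := (hDpsd m).dotProduct_mulVec_nonneg y
          simpa using this
      _ ≤ y ⬝ᵥ y := hsum y
  -- determinant bookkeeping
  have hSd1 : S.det * S⁻¹.det = 1 := by rw [← det_mul, hSinv, det_one]
  have hdetD : ∀ ℓ, (Bm ℓ).det = A.det * (D ℓ).det := by
    intro ℓ
    have h2 : (D ℓ).det = S⁻¹.det * (Bm ℓ).det * S⁻¹.det := by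
      simp only [hDdef, det_mul]
    rw [h2, ← hdetS]
    linear_combination (-(Bm ℓ).det * (S.det * S⁻¹.det + 1)) * hSd1
  have hDdet0 : ∀ ℓ, 0 < (D ℓ).det := by
    intro ℓ
    have h1 := hdetD ℓ
    have h2 : 0 < (Bm ℓ).det := (hBm ℓ).det_pos
    nlinarith
  calc ∏ ℓ, (Bm ℓ).det ^ (1 / p ℓ)
      = ∏ ℓ, (A.det ^ (1 / p ℓ) * (D ℓ).det ^ (1 / p ℓ)) := by
        refine Finset.prod_congr rfl fun ℓ _ => ?_
        rw [hdetD ℓ, Real.mul_rpow hdetA.le (hDdet0 ℓ).le]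
    _ = (∏ ℓ, A.det ^ (1 / p ℓ)) * ∏ ℓ, (D ℓ).det ^ (1 / p ℓ) := Finset.prod_mul_distrib
    _ ≤ (∏ ℓ, A.det ^ (1 / p ℓ)) * 1 := by
        refine mul_le_mul_of_nonneg_left ?_ (Finset.prod_nonneg fun ℓ _ =>
          Real.rpow_nonneg hdetA.le _)
        refine Finset.prod_le_one (fun ℓ _ => Real.rpow_nonneg (hDdet0 ℓ).le _)
          (fun ℓ _ => Real.rpow_le_one (hDdet0 ℓ).le (hDdet ℓ)
            (div_nonneg zero_le_one (le_trans zero_le_one (hp ℓ))))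
    _ = A.det := by
        rw [mul_one, ← Real.rpow_sum_of_pos hdetA, hps, Real.rpow_one]
end
end

section
/- Let H = (H_1,…,H_N) ∈ (0,1)^N with H_1 ≤ ⋯ ≤ H_N, let q ∈ [0, ∑_{ℓ=1}^N 1/H_ℓ), and let τ ∈ {1,…,N} be the integer such that ∑_{ℓ=1}^{τ−1} 1/H_ℓ ≤ q < ∑_{ℓ=1}^{τ} 1/H_ℓ (with the convention that the empty sum equals 0). Then there exists δ_τ ∈ (0,1], depending only on (H_1,…,H_N), such that for every δ ∈ (0, δ_τ) there exist real numbers p_1, …, p_τ ∈ [1,∞) satisfying ∑_{ℓ=1}^τ 1/p_ℓ = 1, H_ℓ q / p_ℓ < 1 for every ℓ = 1,…,τ, and (1−δ) ∑_{ℓ=1}^τ H_ℓ q / p_ℓ ≤ H_τ q + τ − ∑_{ℓ=1}^τ H_τ/H_ℓ. -/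
open Finset

noncomputable section

/-- Lemma 3.4, (3.7)–(3.8): existence of Hölder exponents
`p₁, …, p_τ` adapted to the indices `H₁ ≤ ⋯ ≤ H_N` and to `q`. (Here `H ℓ` denotes
`H_{ℓ+1}` of the paper, so `H (τ-1)` is `H_τ`.) -/
theorem statement18 (N : ℕ) (hN : 1 ≤ N) (H : ℕ → ℝ)
    (hH0 : ∀ ℓ < N, 0 < H ℓ) (hH1 : ∀ ℓ < N, H ℓ < 1)
    (hHmono : ∀ i j : ℕ, i ≤ j → j < N → H i ≤ H j)
    (q : ℝ) (hq0 : 0 ≤ q) (hqN : q < ∑ ℓ ∈ Finset.range N, 1 / H ℓ)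
    (τ : ℕ) (hτ1 : 1 ≤ τ) (hτN : τ ≤ N)
    (hτlo : ∑ ℓ ∈ Finset.range (τ - 1), 1 / H ℓ ≤ q)
    (hτhi : q < ∑ ℓ ∈ Finset.range τ, 1 / H ℓ) :
    ∃ δτ : ℝ, 0 < δτ ∧ δτ ≤ 1 ∧
      ∀ δ : ℝ, 0 < δ → δ < δτ →
        ∃ p : ℕ → ℝ,
          (∀ ℓ < τ, 1 ≤ p ℓ) ∧
          (∑ ℓ ∈ Finset.range τ, 1 / p ℓ = 1) ∧
          (∀ ℓ < τ, H ℓ * q / p ℓ < 1) ∧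
          (1 - δ) * ∑ ℓ ∈ Finset.range τ, H ℓ * q / p ℓ ≤
            H (τ - 1) * q + τ - ∑ ℓ ∈ Finset.range τ, H (τ - 1) / H ℓ := by
  obtain ⟨k, rfl⟩ : ∃ k, τ = k + 1 := ⟨τ - 1, (Nat.succ_pred_eq_of_pos hτ1).symm⟩
  simp only [Nat.add_sub_cancel] at hτlo ⊢
  have hkN : k < N := hτN
  have hpos : (0:ℝ) < H k := hH0 k hkN
  have hHpos : ∀ ℓ < k, (0:ℝ) < H ℓ := fun ℓ hℓ => hH0 ℓ (hℓ.trans hkN)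
  have hHle : ∀ ℓ < k, H ℓ ≤ H k := fun ℓ hℓ => hHmono ℓ k hℓ.le hkN
  rcases Nat.eq_zero_or_pos k with hk0 | hk
  · -- case τ = 1
    subst hk0
    refine ⟨1, one_pos, le_refl 1, fun δ hδ0 hδ1 => ⟨fun _ => 1, ?_, ?_, ?_, ?_⟩⟩
    · intro ℓ _; norm_num
    · simp
    · intro ℓ hℓ
      interval_cases ℓ
      have h1 : q < 1 / H 0 := by simpa using hτhi
      rw [div_one]
      calc H 0 * q < H 0 * (1 / H 0) := by exact (mul_lt_mul_iff_right₀ hpos).mpr h1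
        _ = 1 := by field_simp
    · have h0 : (0:ℝ) ≤ H 0 * q := mul_nonneg hpos.le hq0
      norm_num [Finset.sum_range_one, div_self (ne_of_gt hpos)]
      nlinarith
  · -- main case: τ = k + 1, k ≥ 1
    set s : ℝ := ∑ ℓ ∈ range k, 1 / H ℓ with hs_def
    have hsq : s ≤ q := hτlo
    have hs_single : ∀ ℓ < k, 1 / H ℓ ≤ s := by
      intro ℓ hℓ
      exact Finset.single_le_sum (f := fun j => 1 / H j)
        (fun j hj => by
          have := hH0 j ((Finset.mem_range.mp hj).trans hkN)
          positivity) (Finset.mem_range.mpr hℓ)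
    have hspos : 0 < s := by
      have h1 := hs_single 0 hk
      have h0 : (0:ℝ) < 1 / H 0 := one_div_pos.mpr (hHpos 0 hk)
      linarith
    have hqpos : 0 < q := lt_of_lt_of_le hspos hsq
    have hhi : q < s + 1 / H k := by
      have := hτhi
      rwa [Finset.sum_range_succ] at this
    have hC : 0 < 1 + H k * s - H k * q := by
      have h1 : H k * q < H k * (s + 1 / H k) := (mul_lt_mul_iff_right₀ hpos).mpr hhi
      have h2 : H k * (s + 1 / H k) = H k * s + 1 := by
        rw [mul_add, mul_one_div, div_self (ne_of_gt hpos)]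
      linarith
    have hB : (k:ℝ) ≤ H k * s := by
      have hk' : (k:ℝ) = ∑ ℓ ∈ range k, (1:ℝ) := by simp
      rw [hk', hs_def, Finset.mul_sum]
      refine Finset.sum_le_sum fun ℓ hℓ => ?_
      rw [Finset.mem_range] at hℓ
      rw [mul_one_div, le_div_iff₀ (hHpos ℓ hℓ)]
      simpa using hHle ℓ hℓ
    have hHqge : ∀ ℓ < k, 1 ≤ H ℓ * q := by
      intro ℓ hℓ
      have h1 : 1 / H ℓ ≤ q := le_trans (hs_single ℓ hℓ) hsq
      rw [div_le_iff₀ (hHpos ℓ hℓ)] at h1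
      linarith
    refine ⟨1, one_pos, le_refl 1, fun δ hδ0 hδ1 => ?_⟩
    set B : ℝ := H k * s - k with hB_def
    set C : ℝ := 1 + H k * s - H k * q with hC_def
    have hBnn : 0 ≤ B := by simp only [hB_def]; linarith
    have hhs : 0 < H k * s := mul_pos hpos hspos
    set ε : ℝ := min (δ / (B + 1)) (C / (2 * (H k * s + 1))) with hε_def
    have hε0 : 0 < ε := by
      apply lt_min
      · positivity
      · exact div_pos hC (by linarith)
    have hε1 : ε < 1 := by
      have h1 : ε ≤ δ / (B + 1) := min_le_left _ _
      have h2 : δ / (B + 1) ≤ δ := by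
        rw [div_le_iff₀ (by linarith)]
        nlinarith
      linarith
    have hεB : ε * (B + 1) ≤ δ := by
      have h1 : ε ≤ δ / (B + 1) := min_le_left _ _
      rw [le_div_iff₀ (by linarith)] at h1
      linarith
    have hεC : ε * (H k * s) < C := by
      have h1 : ε ≤ C / (2 * (H k * s + 1)) := min_le_right _ _
      rw [le_div_iff₀ (by linarith)] at h1
      nlinarith
    set x : ℝ := 1 - (1 - ε) * s / q with hx_def
    have hxε : ε ≤ x := by
      have h1 : (1 - ε) * s / q ≤ (1 - ε) := by
        rw [div_le_iff₀ hqpos]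
        nlinarith
      simp only [hx_def]; linarith
    have hx0 : 0 < x := lt_of_lt_of_le hε0 hxε
    have hx1 : x ≤ 1 := by
      have h1 : 0 ≤ (1 - ε) * s / q :=
        div_nonneg (mul_nonneg (by linarith) hspos.le) hqpos.le
      simp only [hx_def]; linarith
    have heqx : H k * q * x = H k * q - (1 - ε) * (H k * s) := by
      rw [hx_def]
      field_simp
    have heqℓ : ∀ ℓ < k, H ℓ * q / (H ℓ * q / (1 - ε)) = 1 - ε := by
      intro ℓ hℓ
      have h1 : H ℓ * q ≠ 0 := by
        have := hHqge ℓ hℓ; intro h; rw [h] at this; linarith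
      rw [div_div_eq_mul_div, mul_comm, mul_div_assoc, div_self h1, mul_one]
    refine ⟨fun ℓ => if ℓ = k then 1 / x else H ℓ * q / (1 - ε), ?_, ?_, ?_, ?_⟩
    · -- 1 ≤ p ℓ
      intro ℓ hℓ
      by_cases hℓk : ℓ = k
      · simp only [hℓk, eq_self_iff_true, if_true]
        exact one_le_one_div hx0 hx1
      · have hℓk' : ℓ < k := lt_of_le_of_ne (Nat.lt_succ_iff.mp hℓ) hℓk
        simp only [if_neg hℓk]
        rw [le_div_iff₀ (by linarith)]
        have := hHqge ℓ hℓk'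
        linarith
    · -- sum of 1/p = 1
      simp only [Finset.sum_range_succ, eq_self_iff_true, if_true, one_div_one_div]
      have hsum : ∑ ℓ ∈ range k, 1 / (if ℓ = k then 1 / x else H ℓ * q / (1 - ε))
          = (1 - ε) * s / q := by
        rw [hs_def, Finset.mul_sum, Finset.sum_div]
        refine Finset.sum_congr rfl fun ℓ hℓ => ?_
        rw [Finset.mem_range] at hℓ
        rw [if_neg (Nat.ne_of_lt hℓ)]
        have h1 : H ℓ ≠ 0 := ne_of_gt (hHpos ℓ hℓ)
        have h2 : q ≠ 0 := ne_of_gt hqpos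
        have h3 : (1:ℝ) - ε ≠ 0 := by linarith
        field_simp
      rw [hsum, hx_def]
      ring
    · -- H ℓ * q / p ℓ < 1
      intro ℓ hℓ
      by_cases hℓk : ℓ = k
      · rw [hℓk]
        simp only [eq_self_iff_true, if_true]
        rw [div_div_eq_mul_div, div_one, heqx]
        simp only [hC_def] at hεC
        have hexp : (1 - ε) * (H k * s) = H k * s - ε * (H k * s) := by ring
        rw [hexp]
        linarith
      · have hℓk' : ℓ < k := lt_of_le_of_ne (Nat.lt_succ_iff.mp hℓ) hℓk
        simp only [if_neg hℓk]
        rw [heqℓ ℓ hℓk']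
        linarith
    · -- the main inequality
      have hsum1 : ∑ ℓ ∈ range (k+1),
          H ℓ * q / (if ℓ = k then 1 / x else H ℓ * q / (1 - ε))
          = (1 - ε) * k + H k * q * x := by
        simp only [Finset.sum_range_succ, eq_self_iff_true, if_true, div_div_eq_mul_div, div_one]
        have h1 : ∑ ℓ ∈ range k,
            H ℓ * q / (if ℓ = k then 1 / x else H ℓ * q / (1 - ε))
            = ∑ ℓ ∈ range k, (1 - ε) := by
          refine Finset.sum_congr rfl fun ℓ hℓ => ?_
          rw [Finset.mem_range] at hℓ
          rw [if_neg (Nat.ne_of_lt hℓ)]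
          exact heqℓ ℓ hℓ
        rw [h1, Finset.sum_const, Finset.card_range, nsmul_eq_mul]
        ring
      have hsum2 : ∑ ℓ ∈ range (k+1), H k / H ℓ = H k * s + 1 := by
        rw [Finset.sum_range_succ, div_self (ne_of_gt hpos), hs_def, Finset.mul_sum]
        congr 1
        exact Finset.sum_congr rfl fun ℓ hℓ => (mul_one_div _ _).symm
      rw [hsum1, hsum2, heqx]
      have hm : H k * s ≤ H k * q := mul_le_mul_of_nonneg_left hsq hpos.le
      have hK : (1:ℝ) ≤ (k:ℝ) := by exact_mod_cast hk
      simp only [hB_def] at hεB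
      have hM1 : 1 ≤ H k * q + (k:ℝ) - H k * s := by linarith
      have hE : 0 ≤ ε * (H k * s - (k:ℝ)) := by
        have := hBnn
        simp only [hB_def] at this
        exact mul_nonneg hε0.le this
      have hEδ : ε * (H k * s - (k:ℝ)) ≤ δ := by
        have e : ε * (H k * s - (k:ℝ)) = ε * (H k * s - (k:ℝ) + 1) - ε := by ring
        rw [e]; linarith
      have e1 : (1 - ε) * (k:ℝ) + (H k * q - (1 - ε) * (H k * s))
          = (H k * q + (k:ℝ) - H k * s) + ε * (H k * s - (k:ℝ)) := by ring
      have key : ∀ M E : ℝ, 1 ≤ M → 0 ≤ E → E ≤ δ → (1 - δ) * (M + E) ≤ M := by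
        intro M E hM hEn hEd
        have p1 : δ * 1 ≤ δ * M := mul_le_mul_of_nonneg_left hM hδ0.le
        have p2 : 0 ≤ δ * E := mul_nonneg hδ0.le hEn
        have e : (1 - δ) * (M + E) = M + E - δ * M - δ * E := by ring
        rw [e]; linarith
      push_cast
      calc (1 - δ) * ((1 - ε) * (k:ℝ) + (H k * q - (1 - ε) * (H k * s)))
          = (1 - δ) * ((H k * q + (k:ℝ) - H k * s) + ε * (H k * s - (k:ℝ))) := by rw [e1]
        _ ≤ H k * q + (k:ℝ) - H k * s := key _ _ hM1 hE hEδ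
        _ ≤ H k * q + ((k:ℝ) + 1) - (H k * s + 1) := by linarith
end
end
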